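/- arXiv:1803.03034 — 2 statements merged into one kernel-verified Lean document; each statement's English description precedes it below -/
import Mathlib

section
/- Let V be a real inner product space, W ⊆ V a subspace admitting an orthogonal projection onto it, p, q positive integers, and J : V → V a symmetric linear map with J² = pJ + qI. If W is slant with slant angle θ with respect to J, then for all X, Y ∈ W: ⟨TX, TY⟩ = cos²θ·(p⟨X, TY⟩ + q⟨X, Y⟩) and ⟨NX, NY⟩ = sin²θ·(p⟨X, TY⟩ + q⟨X, Y⟩). -/
open scoped RealInnerProductSpace

/-- The tangential part of `J X` with respect to the subspace `W`:
`T X := P_W (J X)` (also used for `t U := P_W (J U)` when `U ∈ Wᗮ`). -/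
noncomputable def tang {V : Type*} [NormedAddCommGroup V] [InnerProductSpace ℝ V]
    (W : Submodule ℝ V) [W.HasOrthogonalProjection] (J : V →ₗ[ℝ] V) (X : V) : V :=
  (Submodule.orthogonalProjectionOnto W (J X) : V)

/-- The normal part of `J X` with respect to the subspace `W`:
`N X := J X − T X` (also used for `n U := J U − t U` when `U ∈ Wᗮ`). -/
noncomputable def norm' {V : Type*} [NormedAddCommGroup V] [InnerProductSpace ℝ V]
    (W : Submodule ℝ V) [W.HasOrthogonalProjection] (J : V →ₗ[ℝ] V) (X : V) : V :=
  J X - tang W J X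


/-- If `W` is slant with slant angle `θ` with respect to a symmetric metallic
structure `J` (`J² = pJ + qI`), then for all `X, Y ∈ W`:
`⟨TX, TY⟩ = cos²θ·(p⟨X, TY⟩ + q⟨X, Y⟩)` and `⟨NX, NY⟩ = sin²θ·(p⟨X, TY⟩ + q⟨X, Y⟩)`. -/
theorem slant_inner_identities {V : Type*} [NormedAddCommGroup V] [InnerProductSpace ℝ V]
    (W : Submodule ℝ V) [W.HasOrthogonalProjection]
    (p q : ℕ) (hp : 0 < p) (hq : 0 < q)
    (J : V →ₗ[ℝ] V)
    (hJsym : ∀ x y : V, ⟪J x, y⟫ = ⟪x, J y⟫)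
    (hJ2 : ∀ v : V, J (J v) = (p : ℝ) • J v + (q : ℝ) • v)
    (θ : ℝ) (hθ : θ ∈ Set.Icc 0 (Real.pi / 2))
    (hslant : ∀ X ∈ W, ‖tang W J X‖ = Real.cos θ * ‖J X‖) :
    ∀ X ∈ W, ∀ Y ∈ W,
      ⟪tang W J X, tang W J Y⟫ =
        Real.cos θ ^ 2 * ((p : ℝ) * ⟪X, tang W J Y⟫ + (q : ℝ) * ⟪X, Y⟫) ∧
      ⟪norm' W J X, norm' W J Y⟫ =
        Real.sin θ ^ 2 * ((p : ℝ) * ⟪X, tang W J Y⟫ + (q : ℝ) * ⟪X, Y⟫) := by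
  intro X hX Y hY
  set c := Real.cos θ
  -- T is in W, N is orthogonal to W
  have hTmem : ∀ Z : V, tang W J Z ∈ W := fun Z => (Submodule.orthogonalProjectionOnto W (J Z)).2
  have hNmem : ∀ Z : V, norm' W J Z ∈ Wᗮ := fun Z =>
    Submodule.sub_starProjection_mem_orthogonal (K := W) (J Z)
  -- ⟪Z, J Y⟫ = ⟪Z, T Y⟫ for Z ∈ W
  have hXJ : ∀ Z ∈ W, ∀ Y' : V, ⟪Z, J Y'⟫ = ⟪Z, tang W J Y'⟫ := by
    intro Z hZ Y'
    have h0 : ⟪Z, norm' W J Y'⟫ = 0 :=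
      Submodule.inner_right_of_mem_orthogonal hZ (hNmem Y')
    simp only [norm', inner_sub_right] at h0
    linarith
  -- self inner products
  have hself : ∀ Z ∈ W, ⟪tang W J Z, tang W J Z⟫ = c ^ 2 * ⟪J Z, J Z⟫ := by
    intro Z hZ
    rw [real_inner_self_eq_norm_sq, real_inner_self_eq_norm_sq, hslant Z hZ, mul_pow]
  -- polarization
  have hTadd : tang W J (X + Y) = tang W J X + tang W J Y := by
    simp [tang, map_add]
  have hpol : ⟪tang W J X, tang W J Y⟫ = c ^ 2 * ⟪J X, J Y⟫ := by
    have h1 := hself X hX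
    have h2 := hself Y hY
    have h3 := hself (X + Y) (W.add_mem hX hY)
    rw [hTadd, map_add] at h3
    rw [real_inner_add_add_self, real_inner_add_add_self] at h3
    nlinarith [h1, h2, h3]
  -- ⟪JX, JY⟫ = p⟪X,JY⟫ + q⟪X,Y⟫
  have hJJ : ⟪J X, J Y⟫ = (p : ℝ) * ⟪X, tang W J Y⟫ + (q : ℝ) * ⟪X, Y⟫ := by
    rw [hJsym, hJ2, inner_add_right, real_inner_smul_right, real_inner_smul_right,
      hXJ X hX Y]
  constructor
  · rw [hpol, hJJ]
  · -- normal part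
    have hNT : ∀ Z : V, ∀ Z' ∈ W, ⟪norm' W J Z, Z'⟫ = 0 := fun Z Z' hZ' =>
      Submodule.inner_left_of_mem_orthogonal hZ' (hNmem Z)
    have hexp : ⟪norm' W J X, norm' W J Y⟫
        = ⟪J X, J Y⟫ - ⟪tang W J X, tang W J Y⟫ := by
      have e1 : ⟪norm' W J X, norm' W J Y⟫ = ⟪norm' W J X, J Y⟫ := by
        have h := hNT X (tang W J Y) (hTmem Y)
        rw [show norm' W J Y = J Y - tang W J Y from rfl, inner_sub_right]
        linarith
      have e2 : ⟪norm' W J X, J Y⟫ = ⟪J X, J Y⟫ - ⟪tang W J X, J Y⟫ := by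
        simp only [norm', inner_sub_left]
      have e3 : ⟪tang W J X, J Y⟫ = ⟪tang W J X, tang W J Y⟫ :=
        hXJ (tang W J X) (hTmem X) Y
      rw [e1, e2, e3]
    have hsc : Real.sin θ ^ 2 = 1 - c ^ 2 := by
      have := Real.sin_sq_add_cos_sq θ
      simp only [c]; linarith
    rw [hexp, hpol, hJJ, hsc]; ring
end

section
/- Let V be a real inner product space, W ⊆ V a finite-dimensional subspace, p, q positive integers, and J : V → V a symmetric linear map with J² = pJ + qI. Then W is a semi-slant subspace (i.e. W = D₁ ⊕ D₂ for some mutually orthogonal subspaces D₁, D₂ with J(D₁) = D₁ and D₂ slant with slant angle θ ≠ 0) if and only if there exists a constant λ ∈ [0, 1) such that NX = 0 for every X ∈ W orthogonal to the subspace D := {X ∈ W : T²X = λ(pTX + qX)}; moreover, in that case D = D₂ and λ = cos²θ. -/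
open scoped RealInnerProductSpace

section Aux

variable {V : Type*} [NormedAddCommGroup V] [InnerProductSpace ℝ V]
  (W : Submodule ℝ V) [W.HasOrthogonalProjection] (J : V →ₗ[ℝ] V)

noncomputable def Tlin : V →ₗ[ℝ] V :=
  (W.subtype ∘ₗ (Submodule.orthogonalProjectionOnto W).toLinearMap) ∘ₗ J

lemma tang_eq_Tlin (X : V) : tang W J X = Tlin W J X := rfl

lemma tang_mem (X : V) : tang W J X ∈ W := (Submodule.orthogonalProjectionOnto W (J X)).2

lemma norm'_mem_orthogonal (X : V) : norm' W J X ∈ Wᗮ :=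
  Submodule.sub_starProjection_mem_orthogonal (J X)

lemma inner_tang_left (X : V) {Y : V} (hY : Y ∈ W) :
    ⟪tang W J X, Y⟫ = ⟪J X, Y⟫ := by
  have h := (Submodule.mem_orthogonal W (norm' W J X)).mp (norm'_mem_orthogonal W J X) Y hY
  have h2 : ⟪J X - tang W J X, Y⟫ = 0 := by
    rw [real_inner_comm]; exact h
  rw [inner_sub_left] at h2
  linarith

lemma tang_of_mem {X : V} (hX : J X ∈ W) : tang W J X = J X := by
  exact Submodule.starProjection_eq_self_iff.mpr hX

/-- symmetry of `T` on `W`. -/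
lemma tang_symm (hJsym : ∀ x y : V, ⟪J x, y⟫ = ⟪x, J y⟫) {X Y : V} (hX : X ∈ W) (hY : Y ∈ W) :
    ⟪tang W J X, Y⟫ = ⟪X, tang W J Y⟫ := by
  rw [inner_tang_left W J X hY, hJsym, real_inner_comm,
    ← inner_tang_left W J Y hX, real_inner_comm]

variable (p q : ℕ)

/-- `‖J X‖² = p⟨TX,X⟩ + q⟨X,X⟩` for `X ∈ W`. -/
lemma normJ_sq (hJsym : ∀ x y : V, ⟪J x, y⟫ = ⟪x, J y⟫)
    (hJ2 : ∀ v : V, J (J v) = (p : ℝ) • J v + (q : ℝ) • v) {X : V} (hX : X ∈ W) :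
    ⟪J X, J X⟫ = (p : ℝ) * ⟪tang W J X, X⟫ + (q : ℝ) * ⟪X, X⟫ := by
  have h1 : ⟪J X, J X⟫ = ⟪X, J (J X)⟫ := hJsym X (J X)
  rw [h1, hJ2, inner_add_right, inner_smul_right, inner_smul_right]
  rw [inner_tang_left W J X hX, real_inner_comm X (J X)]

noncomputable def Alin (l : ℝ) : V →ₗ[ℝ] V :=
  Tlin W J ∘ₗ Tlin W J - l • ((p : ℝ) • Tlin W J + (q : ℝ) • LinearMap.id)

lemma Alin_apply (l : ℝ) (X : V) :
    Alin W J p q l X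
      = tang W J (tang W J X) - l • ((p : ℝ) • tang W J X + (q : ℝ) • X) := by
  simp [Alin, tang_eq_Tlin]

lemma Alin_eq_zero_iff (l : ℝ) (X : V) :
    Alin W J p q l X = 0 ↔
      tang W J (tang W J X) = l • ((p : ℝ) • tang W J X + (q : ℝ) • X) := by
  rw [Alin_apply, sub_eq_zero]

/-- symmetry of `A` on `W`. -/
lemma Alin_symm (hJsym : ∀ x y : V, ⟪J x, y⟫ = ⟪x, J y⟫) (l : ℝ) {X Y : V} (hX : X ∈ W) (hY : Y ∈ W) :
    ⟪Alin W J p q l X, Y⟫ = ⟪X, Alin W J p q l Y⟫ := by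
  rw [Alin_apply, Alin_apply]
  have h1 : ⟪tang W J (tang W J X), Y⟫ = ⟪X, tang W J (tang W J Y)⟫ := by
    rw [tang_symm W J hJsym (tang_mem W J X) hY,
      tang_symm W J hJsym hX (tang_mem W J Y)]
  have h2 : ⟪tang W J X, Y⟫ = ⟪X, tang W J Y⟫ := tang_symm W J hJsym hX hY
  simp only [inner_sub_left, inner_sub_right, inner_add_left, inner_add_right,
    inner_smul_left, inner_smul_right, conj_trivial]
  rw [h1, h2]

/-- quadratic form of `A` on `W`. -/
lemma Alin_quad (hJsym : ∀ x y : V, ⟪J x, y⟫ = ⟪x, J y⟫)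
    (hJ2 : ∀ v : V, J (J v) = (p : ℝ) • J v + (q : ℝ) • v) (l : ℝ) {X : V} (hX : X ∈ W) :
    ⟪Alin W J p q l X, X⟫ = ‖tang W J X‖ ^ 2 - l * ‖J X‖ ^ 2 := by
  have h1 : ⟪tang W J (tang W J X), X⟫ = ‖tang W J X‖ ^ 2 := by
    rw [tang_symm W J hJsym (tang_mem W J X) hX, real_inner_self_eq_norm_sq]
  have h2 : ‖J X‖ ^ 2 = (p : ℝ) * ⟪tang W J X, X⟫ + (q : ℝ) * ⟪X, X⟫ := by
    rw [← real_inner_self_eq_norm_sq]; exact normJ_sq W J p q hJsym hJ2 hX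
  rw [Alin_apply]
  simp only [inner_sub_left, inner_add_left, inner_smul_left, conj_trivial]
  rw [h1, h2]

end Aux

section Core

variable {V : Type*} [NormedAddCommGroup V] [InnerProductSpace ℝ V]

lemma core (W : Submodule ℝ V) [W.HasOrthogonalProjection]
    (p q : ℕ) (hp : 0 < p) (hq : 0 < q) (J : V →ₗ[ℝ] V)
    (hJsym : ∀ x y : V, ⟪J x, y⟫ = ⟪x, J y⟫)
    (hJ2 : ∀ v : V, J (J v) = (p : ℝ) • J v + (q : ℝ) • v)
    (D₁ D₂ : Submodule ℝ V) (θ : ℝ)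
    (h1 : D₁ ≤ W) (h2 : D₂ ≤ W) (horth : ∀ x ∈ D₁, ∀ y ∈ D₂, ⟪x, y⟫ = 0)
    (hsup : D₁ ⊔ D₂ = W) (hmap : D₁.map J = D₁) (hθ : θ ∈ Set.Ioc 0 (Real.pi / 2))
    (hslant : ∀ X ∈ D₂, ‖tang W J X‖ = Real.cos θ * ‖J X‖) :
    ∀ X : V, (X ∈ W ∧ Alin W J p q (Real.cos θ ^ 2) X = 0) ↔ X ∈ D₂ := by
  set l : ℝ := Real.cos θ ^ 2 with hl
  have hsin : 0 < Real.sin θ :=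
    Real.sin_pos_of_pos_of_lt_pi hθ.1
      (lt_of_le_of_lt hθ.2 (by linarith [Real.pi_pos]))
  have hl1 : l < 1 := by
    nlinarith [Real.sin_sq_add_cos_sq θ]
  have hJD₁ : ∀ x ∈ D₁, J x ∈ D₁ := fun x hx => by
    rw [← hmap]; exact Submodule.mem_map_of_mem hx
  have hAD₁ : ∀ x ∈ D₁,
      Alin W J p q l x = (1 - l) • ((p : ℝ) • J x + (q : ℝ) • x) := by
    intro x hx
    have ht : tang W J x = J x := tang_of_mem W J (h1 (hJD₁ x hx))
    have ht2 : tang W J (J x) = J (J x) :=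
      tang_of_mem W J (h1 (hJD₁ _ (hJD₁ x hx)))
    rw [Alin_apply, ht, ht2, hJ2]
    module
  have memW_A : ∀ x ∈ W, Alin W J p q l x ∈ W := by
    intro x hx
    rw [Alin_apply]
    exact sub_mem (tang_mem W J _)
      (Submodule.smul_mem _ _ (add_mem (Submodule.smul_mem _ _ (tang_mem W J _))
        (Submodule.smul_mem _ _ hx)))
  have quad : ∀ z ∈ D₂, ⟪Alin W J p q l z, z⟫ = 0 := by
    intro z hz
    rw [Alin_quad W J p q hJsym hJ2 l (h2 hz), hslant z hz]
    ring
  have B1 : ∀ x ∈ D₂, ∀ y ∈ D₂, ⟪Alin W J p q l x, y⟫ = 0 := by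
    intro x hx y hy
    have hxy := quad (x + y) (add_mem hx hy)
    rw [map_add, inner_add_left, inner_add_right, inner_add_right] at hxy
    have hsymAB : ⟪Alin W J p q l y, x⟫ = ⟪Alin W J p q l x, y⟫ := by
      rw [Alin_symm W J p q hJsym l (h2 hy) (h2 hx)]
      exact real_inner_comm _ _
    rw [quad x hx, quad y hy, hsymAB] at hxy
    linarith
  have B2 : ∀ x ∈ D₂, ∀ y ∈ D₁, ⟪Alin W J p q l x, y⟫ = 0 := by
    intro x hx y hy
    rw [Alin_symm W J p q hJsym l (h2 hx) (h1 hy)]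
    have hAy : Alin W J p q l y ∈ D₁ := by
      rw [hAD₁ y hy]
      exact Submodule.smul_mem _ _ (add_mem (Submodule.smul_mem _ _ (hJD₁ y hy))
        (Submodule.smul_mem _ _ hy))
    rw [real_inner_comm]
    exact horth _ hAy x hx
  have B3 : ∀ x ∈ D₂, Alin W J p q l x = 0 := by
    intro x hx
    have hAW : Alin W J p q l x ∈ D₁ ⊔ D₂ := by
      rw [hsup]; exact memW_A x (h2 hx)
    obtain ⟨y1, hy1, y2, hy2, hsum⟩ := Submodule.mem_sup.mp hAW
    have hz : ⟪Alin W J p q l x, y1 + y2⟫ = 0 := by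
      rw [inner_add_right, B1 x hx y2 hy2, B2 x hx y1 hy1, add_zero]
    rw [hsum] at hz
    exact inner_self_eq_zero.mp hz
  intro X
  constructor
  · rintro ⟨hXW, hAX⟩
    rw [← hsup] at hXW
    obtain ⟨x1, hx1, x2, hx2, hsum⟩ := Submodule.mem_sup.mp hXW
    have hA1 : Alin W J p q l x1 = 0 := by
      have := congrArg (Alin W J p q l) hsum
      rw [map_add, B3 x2 hx2, add_zero, hAX] at this
      exact this
    rw [hAD₁ x1 hx1, smul_eq_zero] at hA1
    have hcomb : (p : ℝ) • J x1 + (q : ℝ) • x1 = 0 := by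
      rcases hA1 with h | h
      · exfalso; linarith [sub_ne_zero.mp (by linarith : (1 : ℝ) - l ≠ 0)]
      · exact h
    -- deduce x1 = 0
    have ha : (0 : ℝ) < p := by exact_mod_cast hp
    have hb : (0 : ℝ) < q := by exact_mod_cast hq
    have hJx1 : J x1 = (-(q / p : ℝ)) • x1 := by
      have h' : (p : ℝ) • J x1 = -((q : ℝ) • x1) :=
        eq_neg_of_add_eq_zero_left hcomb
      have := congrArg (fun v => ((p : ℝ)⁻¹) • v) h'
      simp only [smul_smul, inv_mul_cancel₀ ha.ne', one_smul, smul_neg] at this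
      rw [this, ← neg_smul]
      congr 1
      rw [div_eq_inv_mul]
    have hzero : ((-(q / p : ℝ)) * (-(q / p : ℝ))) • x1 = 0 := by
      have hz : J (J x1) = 0 := by rw [hJ2]; exact hcomb
      rw [hJx1, map_smul, hJx1, smul_smul] at hz
      exact hz
    have hx10 : x1 = 0 := by
      rcases smul_eq_zero.mp hzero with h | h
      · exfalso
        have hne : (q / p : ℝ) ≠ 0 := div_ne_zero hb.ne' ha.ne'
        rw [neg_mul_neg] at h
        exact hne (mul_self_eq_zero.mp h)
      · exact h
    rw [← hsum, hx10, zero_add]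
    exact hx2
  · intro hX
    exact ⟨h2 hX, B3 X hX⟩

end Core

section Reverse

variable {V : Type*} [NormedAddCommGroup V] [InnerProductSpace ℝ V]

lemma Alin_comm_Tlin (W : Submodule ℝ V) [W.HasOrthogonalProjection]
    (J : V →ₗ[ℝ] V) (p q : ℕ) (l : ℝ) (x : V) :
    Alin W J p q l (Tlin W J x) = Tlin W J (Alin W J p q l x) := by
  simp only [Alin, LinearMap.sub_apply, LinearMap.comp_apply, LinearMap.smul_apply,
    LinearMap.add_apply, LinearMap.id_apply, map_sub, map_smul, map_add]

lemma reverse_dir (W : Submodule ℝ V) [FiniteDimensional ℝ W]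
    (p q : ℕ) (hp : 0 < p) (hq : 0 < q) (J : V →ₗ[ℝ] V)
    (hJsym : ∀ x y : V, ⟪J x, y⟫ = ⟪x, J y⟫)
    (hJ2 : ∀ v : V, J (J v) = (p : ℝ) • J v + (q : ℝ) • v)
    (l : ℝ) (hl : l ∈ Set.Ico (0 : ℝ) 1)
    (H : ∀ X ∈ W,
      (∀ d : V, d ∈ W →
        tang W J (tang W J d) = l • ((p : ℝ) • tang W J d + (q : ℝ) • d) →
        ⟪X, d⟫ = 0) →
      norm' W J X = 0) :
    ∃ D₁ D₂ : Submodule ℝ V, ∃ θ : ℝ,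
      D₁ ≤ W ∧ D₂ ≤ W ∧ (∀ x ∈ D₁, ∀ y ∈ D₂, ⟪x, y⟫ = 0) ∧ D₁ ⊔ D₂ = W ∧
      D₁.map J = D₁ ∧ θ ∈ Set.Ioc 0 (Real.pi / 2) ∧
      (∀ X ∈ D₂, ‖tang W J X‖ = Real.cos θ * ‖J X‖) := by
  set D : Submodule ℝ V := W ⊓ LinearMap.ker (Alin W J p q l) with hD
  haveI : FiniteDimensional ℝ D := Submodule.finiteDimensional_of_le inf_le_left
  set D₁ : Submodule ℝ V := Dᗮ ⊓ W with hD₁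
  have hDW : D ≤ W := inf_le_left
  have hD₁W : D₁ ≤ W := inf_le_right
  have mem_D : ∀ x : V, x ∈ D ↔ x ∈ W ∧
      tang W J (tang W J x) = l • ((p : ℝ) • tang W J x + (q : ℝ) • x) := by
    intro x
    rw [hD, Submodule.mem_inf, LinearMap.mem_ker, Alin_eq_zero_iff]
  have horth : ∀ x ∈ D₁, ∀ y ∈ D, ⟪x, y⟫ = 0 := by
    intro x hx y hy
    rw [real_inner_comm]
    exact (Submodule.mem_orthogonal D x).mp (Submodule.mem_inf.mp hx).1 y hy
  have hsup : D₁ ⊔ D = W := by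
    apply le_antisymm (sup_le hD₁W hDW)
    intro x hx
    have hsub : x - (Submodule.orthogonalProjectionOnto D x : V) ∈ D₁ := by
      rw [hD₁, Submodule.mem_inf]
      exact ⟨Submodule.sub_starProjection_mem_orthogonal x,
        sub_mem hx (hDW (Submodule.orthogonalProjectionOnto D x).2)⟩
    exact Submodule.mem_sup.mpr ⟨x - (Submodule.orthogonalProjectionOnto D x : V), hsub,
      (Submodule.orthogonalProjectionOnto D x : V), (Submodule.orthogonalProjectionOnto D x).2, by abel⟩
  have hTD : ∀ y ∈ D, tang W J y ∈ D := by
    intro y hy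
    rw [hD, Submodule.mem_inf] at hy ⊢
    refine ⟨tang_mem W J y, ?_⟩
    have h0 : Alin W J p q l y = 0 := hy.2
    rw [LinearMap.mem_ker, tang_eq_Tlin, Alin_comm_Tlin, h0]
    simp
  have hN0 : ∀ x ∈ D₁, norm' W J x = 0 := by
    intro x hx
    apply H x (hD₁W hx)
    intro d hd heq
    have hdD : d ∈ D := (mem_D d).mpr ⟨hd, heq⟩
    rw [real_inner_comm]
    exact (Submodule.mem_orthogonal D x).mp (Submodule.mem_inf.mp hx).1 d hdD
  have hJW : ∀ x ∈ D₁, J x ∈ W := by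
    intro x hx
    have hn := hN0 x hx
    rw [norm', sub_eq_zero] at hn
    rw [hn]
    exact tang_mem W J x
  have hJD₁ : ∀ x ∈ D₁, J x ∈ D₁ := by
    intro x hx
    rw [hD₁, Submodule.mem_inf]
    refine ⟨(Submodule.mem_orthogonal D (J x)).mpr ?_, hJW x hx⟩
    intro y hy
    rw [← hJsym y x]
    have hJy : J y = tang W J y + norm' W J y := by rw [norm']; abel
    rw [hJy, inner_add_left]
    have h1 : ⟪tang W J y, x⟫ = 0 :=
      (Submodule.mem_orthogonal D x).mp (Submodule.mem_inf.mp hx).1 _ (hTD y hy)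
    have h2 : ⟪norm' W J y, x⟫ = 0 := by
      rw [real_inner_comm]
      exact (Submodule.mem_orthogonal W (norm' W J y)).mp
        (norm'_mem_orthogonal W J y) x (hD₁W hx)
    rw [h1, h2, add_zero]
  have hmap : D₁.map J = D₁ := by
    apply le_antisymm
    · exact Submodule.map_le_iff_le_comap.mpr fun x hx => hJD₁ x hx
    · intro x hx
      refine Submodule.mem_map.mpr ⟨(q : ℝ)⁻¹ • (J x - (p : ℝ) • x), ?_, ?_⟩
      · exact Submodule.smul_mem _ _ (sub_mem (hJD₁ x hx) (Submodule.smul_mem _ _ hx))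
      · have hq' : (q : ℝ) ≠ 0 := by positivity
        rw [map_smul, map_sub, map_smul, hJ2]
        rw [add_sub_cancel_left, smul_smul, inv_mul_cancel₀ hq', one_smul]
  refine ⟨D₁, D, Real.arccos (Real.sqrt l), hD₁W, hDW, horth, hsup, hmap, ?_, ?_⟩
  · constructor
    · rw [Real.arccos_pos]
      rw [show (1:ℝ) = Real.sqrt 1 by simp]
      exact Real.sqrt_lt_sqrt hl.1 hl.2
    · exact Real.arccos_le_pi_div_two.mpr (Real.sqrt_nonneg l)
  · intro X hX
    have hcos : Real.cos (Real.arccos (Real.sqrt l)) = Real.sqrt l :=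
      Real.cos_arccos (by linarith [Real.sqrt_nonneg l])
        (by rw [show (1:ℝ) = Real.sqrt 1 by simp];
            exact Real.sqrt_le_sqrt hl.2.le)
    have hXW : X ∈ W := hDW hX
    have hA0 : Alin W J p q l X = 0 := by
      rw [Alin_eq_zero_iff]
      exact ((mem_D X).mp hX).2
    have hquad := Alin_quad W J p q hJsym hJ2 l hXW
    rw [hA0, inner_zero_left] at hquad
    have h1 : ‖tang W J X‖ ^ 2 = l * ‖J X‖ ^ 2 := by linarith
    have := congrArg Real.sqrt h1
    rw [Real.sqrt_sq (norm_nonneg _), Real.sqrt_mul hl.1, Real.sqrt_sq (norm_nonneg _)]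
      at this
    rw [this, hcos]

end Reverse

/-- For a symmetric metallic structure `J` and a finite-dimensional subspace
`W`, `W` is a semi-slant subspace (i.e. `W = D₁ ⊕ D₂` with `D₁ ⊥ D₂`, `J(D₁) = D₁` and
`D₂` slant with angle `θ ≠ 0`) iff there is `λ ∈ [0, 1)` such that `NX = 0` for every
`X ∈ W` orthogonal to `D := {X ∈ W : T²X = λ(pTX + qX)}`; moreover, in that case
`D = D₂` and `λ = cos²θ`. -/
theorem semislant_characterization {V : Type*} [NormedAddCommGroup V]
    [InnerProductSpace ℝ V]
    (W : Submodule ℝ V) [FiniteDimensional ℝ W]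
    (p q : ℕ) (hp : 0 < p) (hq : 0 < q)
    (J : V →ₗ[ℝ] V)
    (hJsym : ∀ x y : V, ⟪J x, y⟫ = ⟪x, J y⟫)
    (hJ2 : ∀ v : V, J (J v) = (p : ℝ) • J v + (q : ℝ) • v) :
    ((∃ D₁ D₂ : Submodule ℝ V, ∃ θ : ℝ,
        D₁ ≤ W ∧ D₂ ≤ W ∧ (∀ x ∈ D₁, ∀ y ∈ D₂, ⟪x, y⟫ = 0) ∧ D₁ ⊔ D₂ = W ∧
        D₁.map J = D₁ ∧ θ ∈ Set.Ioc 0 (Real.pi / 2) ∧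
        (∀ X ∈ D₂, ‖tang W J X‖ = Real.cos θ * ‖J X‖)) ↔
      (∃ l ∈ Set.Ico (0 : ℝ) 1,
        ∀ X ∈ W,
          (∀ d : V, d ∈ W →
            tang W J (tang W J d) = l • ((p : ℝ) • tang W J d + (q : ℝ) • d) →
            ⟪X, d⟫ = 0) →
          norm' W J X = 0)) ∧
    (∀ D₁ D₂ : Submodule ℝ V, ∀ θ : ℝ,
      D₁ ≤ W → D₂ ≤ W → (∀ x ∈ D₁, ∀ y ∈ D₂, ⟪x, y⟫ = 0) → D₁ ⊔ D₂ = W →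
      D₁.map J = D₁ → θ ∈ Set.Ioc 0 (Real.pi / 2) →
      (∀ X ∈ D₂, ‖tang W J X‖ = Real.cos θ * ‖J X‖) →
      {X : V | X ∈ W ∧ tang W J (tang W J X) =
          Real.cos θ ^ 2 • ((p : ℝ) • tang W J X + (q : ℝ) • X)} = (D₂ : Set V)) := by
  constructor
  · constructor
    · rintro ⟨D₁, D₂, θ, h1, h2, horth, hsup, hmap, hθ, hslant⟩
      have hcore := core W p q hp hq J hJsym hJ2 D₁ D₂ θ h1 h2 horth hsup hmap hθ hslant
      refine ⟨Real.cos θ ^ 2, ⟨sq_nonneg _, ?_⟩, ?_⟩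
      · have hsin : 0 < Real.sin θ :=
          Real.sin_pos_of_pos_of_lt_pi hθ.1
            (lt_of_le_of_lt hθ.2 (by linarith [Real.pi_pos]))
        nlinarith [Real.sin_sq_add_cos_sq θ]
      · intro X hX hperp
        -- X is orthogonal to all of D₂
        have hXD₂ : ∀ d ∈ D₂, ⟪X, d⟫ = 0 := by
          intro d hd
          obtain ⟨hdW, hAd⟩ := (hcore d).mpr hd
          exact hperp d hdW ((Alin_eq_zero_iff W J p q _ d).mp hAd)
        -- hence X ∈ D₁
        rw [← hsup] at hX
        obtain ⟨x1, hx1, x2, hx2, hsum⟩ := Submodule.mem_sup.mp hX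
        have hx20 : x2 = 0 := by
          have h0 := hXD₂ x2 hx2
          rw [← hsum, inner_add_left, horth x1 hx1 x2 hx2, zero_add] at h0
          exact inner_self_eq_zero.mp h0
        have hXD₁ : X ∈ D₁ := by rw [← hsum, hx20, add_zero]; exact hx1
        have hJX : J X ∈ W := by
          apply h1
          rw [← hmap]
          exact Submodule.mem_map_of_mem hXD₁
        rw [norm', tang_of_mem W J hJX, sub_self]
    · rintro ⟨l, hl, H⟩
      exact reverse_dir W p q hp hq J hJsym hJ2 l hl H
  · intro D₁ D₂ θ h1 h2 horth hsup hmap hθ hslant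
    have hcore := core W p q hp hq J hJsym hJ2 D₁ D₂ θ h1 h2 horth hsup hmap hθ hslant
    ext X
    rw [Set.mem_setOf_eq, SetLike.mem_coe, ← hcore X, Alin_eq_zero_iff]
end
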